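/- arXiv:2602.18674 — 3 statements merged into one kernel-verified Lean document; each statement's English description precedes it below -/
import Mathlib

section
/- Let C ⊂ ℝ^d be an intersection of finitely many half-spaces, C = ∩_{i=1}^m {z : ⟨v_i, z⟩ + b_i ≤ 0} (with each ‖v_i‖ = 1), let x be an interior point of C with a = min_i |⟨v_i, x⟩ + b_i| > 0, and let r > 0. If ξ is uniform on the sphere of radius r centered at the origin, then P[x + ξ ∉ C] ≤ m · exp(-d·a²/(2r²)). -/
set_option maxHeartbeats 1600000

open MeasureTheory Metric Real RealInnerProductSpace ENNReal

section Aux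


/-- concave on [0,c], zero at endpoints ⇒ nonneg -/
lemma nonneg_of_concaveOn_Icc {c : ℝ} (hc : 0 < c) {f : ℝ → ℝ}
    (hf : ConcaveOn ℝ (Set.Icc 0 c) f) (h0 : 0 ≤ f 0) (h1 : 0 ≤ f c)
    {x : ℝ} (hx : x ∈ Set.Icc 0 c) : 0 ≤ f x := by
  obtain ⟨hx0, hxc⟩ := hx
  have ha : (0:ℝ) ≤ 1 - x / c := by
    have : x / c ≤ 1 := (div_le_one hc).2 hxc
    linarith
  have hb : (0:ℝ) ≤ x / c := div_nonneg hx0 hc.le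
  have hab : (1 - x / c) + x / c = 1 := by ring
  have h := hf.2 (Set.mem_Icc.2 ⟨le_refl 0, hc.le⟩)
    (Set.mem_Icc.2 ⟨hc.le, le_refl c⟩) ha hb hab
  have hxx : (1 - x / c) • (0:ℝ) + (x / c) • c = x := by
    simp only [smul_eq_mul, mul_zero, zero_add]; exact div_mul_cancel₀ _ hc.ne'
  rw [hxx] at h
  simp only [smul_eq_mul] at h
  nlinarith [mul_nonneg (sub_nonneg.2 ((div_le_one hc).2 hxc)) h0,
    mul_nonneg (div_nonneg hx0 hc.le) h1]

lemma key1 {l x : ℝ} (hl0 : 0 ≤ l) (hl1 : l ≤ 1) (hx0 : 0 ≤ x) (hx : x ≤ π / 2) :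
    sin (l * x) ≤ sin (l * (π / 2)) * sin x := by
  have hπ := pi_pos
  set A := sin (l * (π / 2)) with hA
  have hlA : l ≤ A := by
    have := Real.mul_le_sin (x := l * (π / 2)) (by positivity) (by nlinarith)
    calc l = 2 / π * (l * (π / 2)) := by field_simp
    _ ≤ A := this
  have hconc : ConcaveOn ℝ (Set.Icc 0 (π/2)) (fun y => A * sin y - sin (l * y)) := by
    apply concaveOn_of_hasDerivWithinAt2_nonpos (f' := fun y => A * cos y - l * cos (l * y))
      (f'' := fun y => -(A * sin y) + l * (l * sin (l * y)))
      (convex_Icc _ _)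
    · exact (continuous_const.mul Real.continuous_sin |>.sub
        (Real.continuous_sin.comp (continuous_const.mul continuous_id))).continuousOn
    · intro y _
      have h1 : HasDerivAt (fun y : ℝ => A * sin y) (A * cos y) y :=
        (Real.hasDerivAt_sin y).const_mul A
      have h2 : HasDerivAt (fun y : ℝ => sin (l * y)) (cos (l * y) * l) y := by
        have := (Real.hasDerivAt_sin (l * y)).comp y ((hasDerivAt_id y).const_mul l)
        simpa [mul_comm, Function.comp_def] using this
      exact ((h1.sub h2).congr_deriv (by ring)).hasDerivWithinAt
    · intro y _
      have h1 : HasDerivAt (fun y : ℝ => A * cos y) (A * -sin y) y :=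
        (Real.hasDerivAt_cos y).const_mul A
      have h2 : HasDerivAt (fun y : ℝ => l * cos (l * y)) (l * (-sin (l * y) * l)) y := by
        have := ((Real.hasDerivAt_cos (l * y)).comp y ((hasDerivAt_id y).const_mul l)).const_mul l
        simpa [mul_comm] using this
      have := h1.sub h2
      exact (this.congr_deriv (by ring)).hasDerivWithinAt
    · intro y hy
      rw [interior_Icc] at hy
      obtain ⟨hy0, hy2⟩ := hy
      have hsy : 0 ≤ sin y := sin_nonneg_of_nonneg_of_le_pi hy0.le (by linarith)
      have hsl : sin (l * y) ≤ sin y := by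
        rcases eq_or_lt_of_le hl1 with h | h
        · rw [h, one_mul]
        · apply Real.strictMonoOn_sin.monotoneOn ⟨by nlinarith, by nlinarith⟩
            ⟨by linarith, by linarith⟩ (by nlinarith)
      have hsl0 : 0 ≤ sin (l * y) := sin_nonneg_of_nonneg_of_le_pi (by positivity) (by nlinarith)
      have hA0 : 0 ≤ A := le_trans hl0 hlA
      have h5 : l * sin (l * y) ≤ A * sin y := mul_le_mul hlA hsl hsl0 hA0
      nlinarith [mul_nonneg hl0 hsl0]
  have := nonneg_of_concaveOn_Icc (by positivity) hconc (by simp) (by simp [hA])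
    (Set.mem_Icc.2 ⟨hx0, hx⟩)
  linarith

lemma keyE {l y : ℝ} (hl0 : 0 ≤ l) (hl1 : l ≤ 1) (hy0 : 0 ≤ y) (hy : y ≤ π) :
    1 - cos (l * y) ≤ sin (l * (π / 2)) ^ 2 * (1 - cos y) := by
  have hπ := pi_pos
  have sqh : ∀ z : ℝ, sin (z / 2) ^ 2 = (1 - cos z) / 2 := by
    intro z
    have h := Real.cos_sq (z / 2)
    have h' := Real.sin_sq_add_cos_sq (z / 2)
    rw [show 2 * (z / 2) = z by ring] at h
    linarith
  have h1 : sin (y / 2) ^ 2 = (1 - cos y) / 2 := sqh y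
  have h2 : sin (l * y / 2) ^ 2 = (1 - cos (l * y)) / 2 := sqh (l * y)
  have hk := key1 hl0 hl1 (x := y / 2) (by linarith) (by linarith)
  have hs0 : 0 ≤ sin (l * (y / 2)) :=
    sin_nonneg_of_nonneg_of_le_pi (by positivity) (by nlinarith)
  have hA0 : 0 ≤ sin (l * (π / 2)) :=
    sin_nonneg_of_nonneg_of_le_pi (by positivity) (by nlinarith)
  have hss : 0 ≤ sin (y / 2) := sin_nonneg_of_nonneg_of_le_pi (by linarith) (by linarith)
  have hsq : sin (l * (y / 2)) ^ 2 ≤ (sin (l * (π / 2)) * sin (y / 2)) ^ 2 := by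
    apply pow_le_pow_left₀ hs0 hk
  have : l * (y / 2) = l * y / 2 := by ring
  rw [this] at hsq
  rw [h2] at hsq
  nlinarith [hsq]

lemma key2 {l p q u : ℝ} (hl0 : 0 ≤ l) (hl1 : l ≤ 1)
    (hp0 : 0 ≤ p) (hp : p ≤ π / 2) (hq0 : 0 ≤ q) (hq : q ≤ π / 2)
    (hu1 : -1 ≤ u) (hu2 : u ≤ 1) :
    1 - cos (l * p) * cos (l * q) - sin (l * p) * sin (l * q) * u ≤
      sin (l * (π / 2)) ^ 2 * (1 - cos p * cos q - sin p * sin q * u) := by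
  have e2 := keyE hl0 hl1 (y := p + q) (by linarith) (by linarith)
  have e1 : 1 - cos (l * (p - q)) ≤ sin (l * (π / 2)) ^ 2 * (1 - cos (p - q)) := by
    rcases le_total q p with h | h
    · exact keyE hl0 hl1 (by linarith) (by linarith)
    · have := keyE hl0 hl1 (y := q - p) (by linarith) (by linarith)
      have h1 : cos (l * (p - q)) = cos (l * (q - p)) := by
        rw [← cos_neg (l * (p - q))]; ring_nf
      have h2 : cos (p - q) = cos (q - p) := by
        rw [← cos_neg (p - q)]; ring_nf
      rw [h1, h2]; exact this
  rw [mul_sub, cos_sub, cos_sub] at e1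
  rw [mul_add, cos_add, cos_add] at e2
  nlinarith [mul_nonneg (by linarith : (0:ℝ) ≤ 1 + u)
      (by linarith : (0:ℝ) ≤ sin (l*(π/2))^2 * (1 - (cos p * cos q + sin p * sin q)) - (1 - (cos (l*p) * cos (l*q) + sin (l*p) * sin (l*q)))),
    mul_nonneg (by linarith : (0:ℝ) ≤ 1 - u)
      (by linarith : (0:ℝ) ≤ sin (l*(π/2))^2 * (1 - (cos p * cos q - sin p * sin q)) - (1 - (cos (l*p) * cos (l*q) - sin (l*p) * sin (l*q))))]
end Aux

section GeomAux

variable {E : Type*} [NormedAddCommGroup E] [InnerProductSpace ℝ E]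



noncomputable def capmap (v : E) (r l : ℝ) (ξ : E) : E :=
  (r * Real.cos (l * Real.arccos (⟪v, ξ⟫ / r))) • v
  + (r * Real.sin (l * Real.arccos (⟪v, ξ⟫ / r)) / ‖ξ - ⟪v, ξ⟫ • v‖) • (ξ - ⟪v, ξ⟫ • v)




/-- basic per-point facts -/
lemma capmap_pt (v : E) (hv : ‖v‖ = 1) (hr : 0 < r) {ξ : E} (hξ : ‖ξ‖ = r) (hξ0 : 0 ≤ ⟪v, ξ⟫) :
    cos (arccos (⟪v, ξ⟫ / r)) = ⟪v, ξ⟫ / r ∧ arccos (⟪v, ξ⟫ / r) ≤ π / 2 ∧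
      ⟪v, ξ - ⟪v, ξ⟫ • v⟫ = 0 ∧ ‖ξ - ⟪v, ξ⟫ • v‖ = r * sin (arccos (⟪v, ξ⟫ / r)) := by
  have htr : ⟪v, ξ⟫ ≤ r := by
    have h := real_inner_le_norm v ξ
    rw [hv, hξ, one_mul] at h; exact h
  have h1 : ⟪v, ξ⟫ / r ≤ 1 := (div_le_one hr).2 htr
  have h0 : 0 ≤ ⟪v, ξ⟫ / r := div_nonneg hξ0 hr.le
  refine ⟨cos_arccos (by linarith) h1, arccos_le_pi_div_two.2 h0, ?_, ?_⟩
  · simp [inner_sub_right, real_inner_smul_right, real_inner_self_eq_norm_sq, hv]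
  · have hw : ‖ξ - ⟪v, ξ⟫ • v‖ ^ 2 = r ^ 2 - ⟪v, ξ⟫ ^ 2 := by
      rw [norm_sub_sq_real]
      simp [real_inner_smul_right, norm_smul, real_inner_comm ξ v, hv, hξ, abs_of_nonneg hξ0]
      ring
    have : ‖ξ - ⟪v, ξ⟫ • v‖ = Real.sqrt (r ^ 2 - ⟪v, ξ⟫ ^ 2) := by
      rw [← hw, Real.sqrt_sq (norm_nonneg _)]
    rw [this, sin_arccos]
    rw [show r ^ 2 - ⟪v, ξ⟫ ^ 2 = r ^ 2 * (1 - (⟪v, ξ⟫ / r) ^ 2) by field_simp]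
    rw [Real.sqrt_mul (by positivity), Real.sqrt_sq hr.le]

lemma capmap_lip (v : E) (hv : ‖v‖ = 1) (hr : 0 < r) (hl0 : 0 ≤ l) (hl1 : l ≤ 1)
    {ξ η : E} (hξ : ‖ξ‖ = r) (hη : ‖η‖ = r) (hξ0 : 0 ≤ ⟪v, ξ⟫) (hη0 : 0 ≤ ⟪v, η⟫) :
    ‖capmap v r l ξ - capmap v r l η‖ ≤ sin (l * (π / 2)) * ‖ξ - η‖ := by
  obtain ⟨hc1, hp1, hv1, hn1⟩ := capmap_pt v hv hr hξ hξ0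
  obtain ⟨hc2, hp2, hv2, hn2⟩ := capmap_pt v hv hr hη hη0
  set t1 := ⟪v, ξ⟫ with ht1
  set t2 := ⟪v, η⟫ with ht2
  set φ1 := arccos (t1 / r) with hφ1
  set φ2 := arccos (t2 / r) with hφ2
  set w1 := ξ - t1 • v with hw1
  set w2 := η - t2 • v with hw2
  have hφ10 : 0 ≤ φ1 := arccos_nonneg _
  have hφ20 : 0 ≤ φ2 := arccos_nonneg _
  have hπ := pi_pos
  have hlφ1 : l * φ1 ≤ π := by
    have h := mul_le_mul_of_nonneg_right hl1 hφ10
    rw [one_mul] at h; linarith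
  have hlφ2 : l * φ2 ≤ π := by
    have h := mul_le_mul_of_nonneg_right hl1 hφ20
    rw [one_mul] at h; linarith
  have hsl1 : 0 ≤ sin (l * φ1) :=
    sin_nonneg_of_nonneg_of_le_pi (by positivity) hlφ1
  have hsl2 : 0 ≤ sin (l * φ2) :=
    sin_nonneg_of_nonneg_of_le_pi (by positivity) hlφ2
  set q1 := r * Real.sin (l * φ1) / ‖w1‖ with hq1
  set q2 := r * Real.sin (l * φ2) / ‖w2‖ with hq2
  set c1 := r * Real.cos (l * φ1) with hc1'
  set c2 := r * Real.cos (l * φ2) with hc2'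
  have hfξ : capmap v r l ξ = c1 • v + q1 • w1 := rfl
  have hfη : capmap v r l η = c2 • v + q2 • w2 := rfl
  -- q_i * ‖w_i‖ = r * sin (l * φ_i)
  have hQ : ∀ (w : E) (φ : ℝ), 0 ≤ φ → φ ≤ π / 2 → ‖w‖ = r * sin φ →
      r * Real.sin (l * φ) / ‖w‖ * ‖w‖ = r * sin (l * φ) := by
    intro w φ h0 h2 hn
    by_cases hW : ‖w‖ = 0
    · rw [hW, mul_zero]
      have hsφ : sin φ = 0 := by
        rw [hn] at hW; rcases mul_eq_zero.1 hW with h | h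
        · exact absurd h (ne_of_gt hr)
        · exact h
      have : φ = 0 := by
        rw [← sin_eq_zero_iff_of_lt_of_lt (by linarith) (by linarith)]; exact hsφ
      rw [this, mul_zero, Real.sin_zero, mul_zero]
    · exact div_mul_cancel₀ _ hW
  have hQ1 : q1 * ‖w1‖ = r * sin (l * φ1) := hQ w1 φ1 hφ10 hp1 hn1
  have hQ2 : q2 * ‖w2‖ = r * sin (l * φ2) := hQ w2 φ2 hφ20 hp2 hn2
  -- a common u
  obtain ⟨u, hu1, hu2, hPu, hQu⟩ : ∃ u : ℝ, -1 ≤ u ∧ u ≤ 1 ∧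
      ⟪w1, w2⟫ = ‖w1‖ * ‖w2‖ * u ∧ q1 * q2 * ⟪w1, w2⟫ = (r * sin (l * φ1)) * (r * sin (l * φ2)) * u := by
    by_cases hW1 : ‖w1‖ = 0
    · have : w1 = 0 := norm_eq_zero.1 hW1
      refine ⟨0, by norm_num, by norm_num, by simp [this], by simp [this]⟩
    by_cases hW2 : ‖w2‖ = 0
    · have : w2 = 0 := norm_eq_zero.1 hW2
      refine ⟨0, by norm_num, by norm_num, by simp [this], by simp [this]⟩
    refine ⟨⟪w1, w2⟫ / (‖w1‖ * ‖w2‖), ?_, ?_, by field_simp, ?_⟩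
    · rw [neg_le, ← neg_div]
      apply div_le_one_of_le₀ ?_ (by positivity)
      have := abs_real_inner_le_norm w1 w2
      rw [abs_le] at this
      linarith [this.1]
    · apply div_le_one_of_le₀ ?_ (by positivity)
      have := abs_real_inner_le_norm w1 w2
      rw [abs_le] at this
      exact this.2
    · rw [← hQ1, ← hQ2]
      field_simp
  -- inner product of images
  have hinner : ⟪c1 • v + q1 • w1, c2 • v + q2 • w2⟫ = c1 * c2 + q1 * q2 * ⟪w1, w2⟫ := by
    have hv1' : ⟪w1, v⟫ = 0 := by rw [real_inner_comm]; exact hv1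
    have hv2' : ⟪w2, v⟫ = 0 := by rw [real_inner_comm]; exact hv2
    simp [inner_add_left, inner_add_right, real_inner_smul_left, real_inner_smul_right,
      real_inner_self_eq_norm_sq, hv, hv1, hv2, hv1', hv2']
    ring
  have hns : ∀ (c q : ℝ) (w : E) (S : ℝ), ⟪v, w⟫ = 0 → q * ‖w‖ = S →
      ‖c • v + q • w‖ ^ 2 = c ^ 2 + S ^ 2 := by
    intro c q w S hvw hqw
    rw [norm_add_sq_real]
    simp [real_inner_smul_left, real_inner_smul_right, norm_smul, hvw, hv]
    rw [mul_pow, sq_abs, ← mul_pow, hqw]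
  have hns1 : ‖c1 • v + q1 • w1‖ ^ 2 = c1 ^ 2 + (r * sin (l * φ1)) ^ 2 := hns c1 q1 w1 _ hv1 hQ1
  have hns2 : ‖c2 • v + q2 • w2‖ ^ 2 = c2 ^ 2 + (r * sin (l * φ2)) ^ 2 := hns c2 q2 w2 _ hv2 hQ2
  -- decompose ξ and η
  have hξd : ξ = t1 • v + w1 := by rw [hw1]; abel
  have hηd : η = t2 • v + w2 := by rw [hw2]; abel
  have hinner0 : ⟪ξ, η⟫ = t1 * t2 + ⟪w1, w2⟫ := by
    conv_lhs => rw [hξd, hηd]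
    have hv1' : ⟪w1, v⟫ = 0 := by rw [real_inner_comm]; exact hv1
    have hv2' : ⟪w2, v⟫ = 0 := by rw [real_inner_comm]; exact hv2
    simp [inner_add_left, inner_add_right, real_inner_smul_left, real_inner_smul_right,
      real_inner_self_eq_norm_sq, hv, hv1, hv2, hv1', hv2']
    ring
  -- the two squared norms
  have ht1c : t1 = r * cos φ1 := by rw [hc1]; field_simp
  have ht2c : t2 = r * cos φ2 := by rw [hc2]; field_simp
  have hsq1 : ‖capmap v r l ξ - capmap v r l η‖ ^ 2 =
      2 * r ^ 2 - 2 * (c1 * c2 + (r * sin (l * φ1)) * (r * sin (l * φ2)) * u) := by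
    rw [hfξ, hfη, norm_sub_sq_real, hinner, hns1, hns2, hQu]
    have e1 : c1 ^ 2 + (r * sin (l * φ1)) ^ 2 = r ^ 2 := by
      rw [hc1']; linear_combination (r ^ 2) * (sin_sq_add_cos_sq (l * φ1))
    have e2 : c2 ^ 2 + (r * sin (l * φ2)) ^ 2 = r ^ 2 := by
      rw [hc2']; linear_combination (r ^ 2) * (sin_sq_add_cos_sq (l * φ2))
    rw [e1, e2]; ring
  have hsq0 : ‖ξ - η‖ ^ 2 = 2 * r ^ 2 - 2 * (r * cos φ1 * (r * cos φ2) + (r * sin φ1) * (r * sin φ2) * u) := by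
    rw [norm_sub_sq_real, hinner0, hξ, hη, hPu, hn1, hn2, ← ht1c, ← ht2c]
    ring
  -- key inequality
  have hA0 : 0 ≤ sin (l * (π / 2)) := by
    apply sin_nonneg_of_nonneg_of_le_pi (by positivity)
    have h := mul_le_mul_of_nonneg_right hl1 (le_of_lt (by positivity : (0:ℝ) < π / 2))
    rw [one_mul] at h; linarith
  have hk := key2 hl0 hl1 hφ10 hp1 hφ20 hp2 hu1 hu2
  have hmain : ‖capmap v r l ξ - capmap v r l η‖ ^ 2 ≤
      (sin (l * (π / 2)) * ‖ξ - η‖) ^ 2 := by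
    rw [hsq1, mul_pow, hsq0, hc1', hc2']
    have h2 := mul_le_mul_of_nonneg_left hk (by positivity : (0:ℝ) ≤ 2 * r ^ 2)
    linarith [h2]
  calc ‖capmap v r l ξ - capmap v r l η‖
      = Real.sqrt (‖capmap v r l ξ - capmap v r l η‖ ^ 2) := by
        rw [Real.sqrt_sq (norm_nonneg _)]
    _ ≤ Real.sqrt ((sin (l * (π / 2)) * ‖ξ - η‖) ^ 2) := Real.sqrt_le_sqrt hmain
    _ = sin (l * (π / 2)) * ‖ξ - η‖ := Real.sqrt_sq (by positivity)





lemma capmap_surj (v : E) (hv : ‖v‖ = 1) {r σ : ℝ} (hr : 0 < r) (hσ0 : 0 < σ) (hσ1 : σ < 1)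
    {η : E} (hη : ‖η‖ = r) (hηa : r * σ < ⟪v, η⟫) :
    ∃ ξ : E, ‖ξ‖ = r ∧ 0 < ⟪v, ξ⟫ ∧ capmap v r (2 * arccos σ / π) ξ = η := by
  have hπ := pi_pos
  set l := 2 * arccos σ / π with hl
  have hθ0 : 0 < arccos σ := arccos_pos.2 hσ1
  have hθ2 : arccos σ < π / 2 := arccos_lt_pi_div_two.2 hσ0
  have hl0 : 0 < l := by positivity
  have hl1 : l < 1 := by rw [hl, div_lt_one hπ]; linarith
  have hτ0 : 0 ≤ ⟪v, η⟫ := le_of_lt (lt_of_le_of_lt (by positivity) hηa)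
  obtain ⟨hcψ, hψ2, hvw, hnw⟩ := capmap_pt v hv hr hη hτ0
  set τ := ⟪v, η⟫ with hτ
  set ψ := arccos (τ / r) with hψ
  set w := η - τ • v with hw
  have hψ0 : 0 ≤ ψ := arccos_nonneg _
  have hτr : τ / r ≤ 1 := by
    rw [div_le_one hr]
    have h := real_inner_le_norm v η
    rwa [hv, hη, one_mul] at h
  have hψθ : ψ < arccos σ := by
    rw [hψ]
    apply strictAntiOn_arccos ⟨by linarith, hσ1.le⟩
      ⟨by linarith [div_nonneg hτ0 hr.le], hτr⟩
    rw [lt_div_iff₀ hr]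
    linarith [hηa]
  set β := ψ / l with hβ
  have hβ0 : 0 ≤ β := div_nonneg hψ0 hl0.le
  have hβ2 : β < π / 2 := by
    rw [hβ, div_lt_iff₀ hl0]
    have : π / 2 * l = arccos σ := by rw [hl]; field_simp
    rw [this]; exact hψθ
  have hlβ : l * β = ψ := by rw [hβ]; field_simp
  have hcβ : 0 < cos β := cos_pos_of_mem_Ioo ⟨by linarith, hβ2⟩
  have hsβ : 0 ≤ sin β := sin_nonneg_of_nonneg_of_le_pi hβ0 (by linarith)
  by_cases hW : w = 0
  · -- η = r • v
    have hsψ : sin ψ = 0 := by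
      have := hnw; rw [hW, norm_zero] at this
      rcases mul_eq_zero.1 this.symm with h | h
      · exact absurd h (ne_of_gt hr)
      · exact h
    have hψ0' : ψ = 0 := by
      rw [← sin_eq_zero_iff_of_lt_of_lt (by linarith) (by linarith)]; exact hsψ
    have hτR : τ = r := by
      have h1 : τ / r = 1 := by rw [← hcψ, hψ0', Real.cos_zero]
      field_simp at h1; linarith [h1]
    have hηv : η = r • v := by
      have : η - τ • v = 0 := hW
      have h2 : η = τ • v := by rwa [sub_eq_zero] at this
      rw [h2, hτR]
    refine ⟨η, hη, by rw [← hτ]; linarith, ?_⟩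
    rw [hηv]
    have h1 : ⟪v, r • v⟫ = r := by
      rw [real_inner_smul_right, real_inner_self_eq_norm_sq, hv]; ring
    rw [capmap, h1]
    have : (r : ℝ) / r = 1 := div_self (ne_of_gt hr)
    rw [this, Real.arccos_one]
    simp
  · have hnw0 : ‖w‖ ≠ 0 := fun h => hW (norm_eq_zero.1 h)
    have hsψ0 : 0 < sin ψ := by
      have h1 : 0 ≤ sin ψ := sin_nonneg_of_nonneg_of_le_pi hψ0 (by linarith)
      rcases lt_or_eq_of_le h1 with h | h
      · exact h
      · exfalso; apply hnw0; rw [hnw, ← h, mul_zero]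
    have hψpos : 0 < ψ := by
      rcases lt_or_eq_of_le hψ0 with h | h
      · exact h
      · exfalso; rw [← h, Real.sin_zero] at hsψ0; exact lt_irrefl 0 hsψ0
    have hβpos : 0 < β := div_pos hψpos hl0
    have hsβ0 : 0 < sin β := sin_pos_of_pos_of_lt_pi hβpos (by linarith)
    refine ⟨(r * cos β) • v + (r * sin β / ‖w‖) • w, ?_, ?_, ?_⟩
    · -- norm
      have hn : ‖(r * cos β) • v + (r * sin β / ‖w‖) • w‖ ^ 2 = r ^ 2 := by
        rw [norm_add_sq_real]
        simp [real_inner_smul_left, real_inner_smul_right, norm_smul, hvw, hv]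
        rw [abs_of_nonneg hr.le, abs_of_nonneg hcβ.le, abs_of_nonneg hsβ,
          div_mul_cancel₀ _ hnw0]
        linear_combination (r ^ 2) * sin_sq_add_cos_sq β
      calc ‖(r * cos β) • v + (r * sin β / ‖w‖) • w‖
          = Real.sqrt (‖(r * cos β) • v + (r * sin β / ‖w‖) • w‖ ^ 2) :=
            (Real.sqrt_sq (norm_nonneg _)).symm
        _ = Real.sqrt (r ^ 2) := by rw [hn]
        _ = r := Real.sqrt_sq hr.le
    · rw [inner_add_right, real_inner_smul_right, real_inner_smul_right,
        real_inner_self_eq_norm_sq, hv, hvw]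
      simp only [one_pow, mul_one, mul_zero, add_zero]
      positivity
    · -- capmap computes to η
      set ξ := (r * cos β) • v + (r * sin β / ‖w‖) • w with hξ
      have hvξ : ⟪v, ξ⟫ = r * cos β := by
        rw [hξ, inner_add_right, real_inner_smul_right, real_inner_smul_right,
          real_inner_self_eq_norm_sq, hv, hvw]
        ring
      have hwξ : ξ - ⟪v, ξ⟫ • v = (r * sin β / ‖w‖) • w := by
        rw [hvξ, hξ]; abel
      have hφξ : arccos (⟪v, ξ⟫ / r) = β := by
        rw [hvξ]
        have : r * cos β / r = cos β := by field_simp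
        rw [this, arccos_cos hβ0 (by linarith)]
      have hnwξ : ‖ξ - ⟪v, ξ⟫ • v‖ = r * sin β := by
        rw [hwξ, norm_smul, Real.norm_eq_abs,
          abs_of_nonneg (by positivity : (0:ℝ) ≤ r * sin β / ‖w‖),
          div_mul_cancel₀ _ hnw0]
      rw [capmap, hφξ, hlβ, hnwξ, hwξ]
      rw [smul_smul]
      have hc1 : r * sin ψ / (r * sin β) * (r * sin β / ‖w‖) = 1 := by
        rw [hnw]
        field_simp
      rw [hc1, one_smul]
      have : τ = r * cos ψ := by
        rw [hcψ]; field_simp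
      rw [← this, hw]
      abel



/-- measure of a spherical cap at inner-product height `a`, relative to the whole sphere -/
lemma cap_measure_le [MeasurableSpace E] [BorelSpace E]
    (d : ℕ) (hd : 1 ≤ d) (v : E) (hv : ‖v‖ = 1) {r a : ℝ} (hr : 0 < r) (ha : 0 < a)
    (har : a ≤ r) :
    μH[(d:ℝ)-1] (sphere (0:E) r ∩ {ξ | a ≤ ⟪v, ξ⟫}) ≤
      ENNReal.ofReal (Real.exp (-((d:ℝ) * (a/r)^2) / 2)) * μH[(d:ℝ)-1] (sphere (0:E) r) := by
  have hπ := pi_pos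
  have hd1 : (1:ℝ) ≤ (d:ℝ) := by exact_mod_cast hd
  have hd' : (0:ℝ) ≤ (d:ℝ) - 1 := by linarith
  set s : ℝ := (a / r) ^ 2 with hs
  have hs0 : 0 < s := by positivity
  have hs1 : s ≤ 1 := by
    rw [hs]
    have : a / r ≤ 1 := (div_le_one hr).2 har
    nlinarith [div_nonneg ha.le hr.le]
  have hlog2 : (0.6931471803:ℝ) < Real.log 2 := Real.log_two_gt_d9
  -- choice of s'
  obtain ⟨s', hs'0, hs's, hkey⟩ : ∃ s', 0 < s' ∧ s' < s ∧
      (d:ℝ) * s - 2 * Real.log 2 ≤ ((d:ℝ) - 1) * s' := by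
    by_cases hds : (d:ℝ) * s ≤ 2 * Real.log 2
    · exact ⟨s / 2, by positivity, by linarith, by nlinarith [mul_nonneg hd' (by positivity : (0:ℝ) ≤ s / 2)]⟩
    · push_neg at hds
      have hd2 : (2:ℝ) ≤ (d:ℝ) := by
        by_contra h
        push_neg at h
        have : (d:ℝ) = 1 := by
          have : (d:ℕ) < 2 := by exact_mod_cast h
          interval_cases d
          · norm_num
        rw [this, one_mul] at hds
        nlinarith
      refine ⟨((d:ℝ) * s - 2 * Real.log 2) / ((d:ℝ) - 1), div_pos (by linarith) (by linarith), ?_, ?_⟩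
      · rw [div_lt_iff₀ (by linarith)]
        nlinarith
      · rw [mul_div_cancel₀ _ (by linarith : (d:ℝ) - 1 ≠ 0)]
  have hs'1 : s' < 1 := lt_of_lt_of_le hs's hs1
  set σ := Real.sqrt s' with hσ
  have hσ0 : 0 < σ := Real.sqrt_pos.2 hs'0
  have hσs : σ < a / r := by
    have h1 : σ < Real.sqrt s := Real.sqrt_lt_sqrt hs'0.le hs's
    have h2 : Real.sqrt s = a / r := by
      rw [hs, Real.sqrt_sq (by positivity)]
    linarith [h2 ▸ h1]
  have hσ1 : σ < 1 := lt_of_lt_of_le hσs ((div_le_one hr).2 har)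
  set θ := arccos σ with hθ
  have hθ0 : 0 < θ := arccos_pos.2 hσ1
  have hθ2 : θ < π / 2 := arccos_lt_pi_div_two.2 hσ0
  set l := 2 * θ / π with hl
  have hl0 : 0 < l := by positivity
  have hl1 : l < 1 := by rw [hl, div_lt_one hπ]; linarith
  have hlθ : l * (π / 2) = θ := by rw [hl]; field_simp
  set A := sin θ with hA
  have hA0 : 0 ≤ A := sin_nonneg_of_nonneg_of_le_pi hθ0.le (by linarith)
  have hAs : A = Real.sqrt (1 - s') := by
    rw [hA, hθ, sin_arccos, hσ, Real.sq_sqrt hs'0.le]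
  -- hemisphere
  set S : Set E := sphere (0:E) r with hS
  set H : Set E := S ∩ {ξ : E | 0 < ⟪v, ξ⟫} with hH
  -- inclusion of the cap into the image
  have hsub : S ∩ {ξ : E | a ≤ ⟪v, ξ⟫} ⊆ capmap v r l '' H := by
    rintro η ⟨hηS, hηa⟩
    have hηr : ‖η‖ = r := mem_sphere_zero_iff_norm.1 hηS
    have hra : r * σ < ⟪v, η⟫ := by
      have : r * σ < a := by
        have := (mul_lt_mul_iff_right₀ hr).2 hσs
        rwa [mul_div_cancel₀ _ (ne_of_gt hr)] at this
      exact lt_of_lt_of_le this hηa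
    obtain ⟨ξ, hξr, hξ0, hξeq⟩ := capmap_surj v hv hr hσ0 hσ1 hηr hra
    exact ⟨ξ, ⟨mem_sphere_zero_iff_norm.2 hξr, hξ0⟩, by rw [← hl] at hξeq; exact hξeq⟩
  -- Lipschitz bound
  have hlip : LipschitzOnWith A.toNNReal (capmap v r l) H := by
    apply LipschitzOnWith.of_dist_le_mul
    intro ξ hξ η hη
    rw [dist_eq_norm, dist_eq_norm, Real.coe_toNNReal _ hA0]
    have h := capmap_lip v hv hr hl0.le hl1.le
      (mem_sphere_zero_iff_norm.1 hξ.1) (mem_sphere_zero_iff_norm.1 hη.1)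
      (le_of_lt hξ.2) (le_of_lt hη.2)
    rwa [hlθ, ← hA] at h
  have step2 : μH[(d:ℝ)-1] (capmap v r l '' H) ≤
      (A.toNNReal : ℝ≥0∞) ^ ((d:ℝ)-1) * μH[(d:ℝ)-1] H :=
    hlip.hausdorffMeasure_image_le hd'
  -- reflection
  set R : E → E := fun ξ => ξ - (2 * ⟪v, ξ⟫) • v with hR
  have hRnorm : ∀ z : E, ‖R z‖ = ‖z‖ := by
    intro z
    have h : ‖z - (2 * ⟪v, z⟫) • v‖ ^ 2 = ‖z‖ ^ 2 := by
      rw [norm_sub_sq_real]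
      simp [real_inner_smul_right, norm_smul, real_inner_comm z v, hv]
      rw [mul_pow, sq_abs]
      ring
    calc ‖R z‖ = Real.sqrt (‖R z‖ ^ 2) := (Real.sqrt_sq (norm_nonneg _)).symm
      _ = Real.sqrt (‖z‖ ^ 2) := by rw [hR]; simp only []; rw [h]
      _ = ‖z‖ := Real.sqrt_sq (norm_nonneg _)
  have hRlin : ∀ z z' : E, R z - R z' = z - z' - (2 * ⟪v, z - z'⟫) • v := by
    intro z z'
    rw [hR]
    simp only [inner_sub_right]
    rw [show (2 * (⟪v, z⟫ - ⟪v, z'⟫)) • v = (2 * ⟪v, z⟫) • v - (2 * ⟪v, z'⟫) • v by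
      rw [← sub_smul]; ring_nf]
    abel
  have hRiso : Isometry R := by
    apply Isometry.of_dist_eq
    intro z z'
    rw [dist_eq_norm, dist_eq_norm, hRlin]
    have := hRnorm (z - z')
    rw [hR] at this
    simp only [] at this ⊢
    exact this
  have hRinner : ∀ z : E, ⟪v, R z⟫ = -⟪v, z⟫ := by
    intro z
    rw [hR]
    simp [inner_sub_right, real_inner_smul_right, real_inner_self_eq_norm_sq, hv]
    ring
  have hRR : ∀ z : E, R (R z) = z := by
    intro z
    rw [hR]
    simp only [inner_sub_right, real_inner_smul_right, real_inner_self_eq_norm_sq, hv]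
    rw [show ((2:ℝ) * (⟪v, z⟫ - 2 * ⟪v, z⟫ * (1:ℝ)^2)) = -(2 * ⟪v, z⟫) by ring]
    rw [neg_smul]
    abel
  set H' : Set E := S ∩ {ξ : E | ⟪v, ξ⟫ < 0} with hH'
  have hRimg : R '' H = H' := by
    ext ζ
    constructor
    · rintro ⟨ξ, ⟨hξS, hξ0⟩, rfl⟩
      refine ⟨?_, ?_⟩
      · rw [hS, mem_sphere_zero_iff_norm, hRnorm]
        exact mem_sphere_zero_iff_norm.1 hξS
      · rw [Set.mem_setOf_eq, hRinner]
        have h0 : (0:ℝ) < ⟪v, ξ⟫ := hξ0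
        linarith
    · rintro ⟨hζS, hζ0⟩
      refine ⟨R ζ, ⟨?_, ?_⟩, hRR ζ⟩
      · rw [hS, mem_sphere_zero_iff_norm, hRnorm]
        exact mem_sphere_zero_iff_norm.1 hζS
      · rw [Set.mem_setOf_eq, hRinner]
        simp only [Set.mem_setOf_eq] at hζ0
        linarith
  have hmeasH' : MeasurableSet H' := by
    apply (isClosed_sphere.measurableSet).inter
    exact (isOpen_lt (continuous_const.inner continuous_id) continuous_const).measurableSet
  have hdisj : Disjoint H H' := by
    rw [Set.disjoint_iff]
    rintro ξ ⟨⟨_, h1⟩, ⟨_, h2⟩⟩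
    simp only [Set.mem_setOf_eq] at h1 h2
    exact absurd (lt_trans h1 h2) (lt_irrefl 0)
  have hHmen : μH[(d:ℝ)-1] H' = μH[(d:ℝ)-1] H := by
    rw [← hRimg]
    exact hRiso.hausdorffMeasure_image (Or.inl hd') H
  have htwo : μH[(d:ℝ)-1] H + μH[(d:ℝ)-1] H ≤ μH[(d:ℝ)-1] S := by
    calc μH[(d:ℝ)-1] H + μH[(d:ℝ)-1] H = μH[(d:ℝ)-1] H + μH[(d:ℝ)-1] H' := by rw [hHmen]
      _ = μH[(d:ℝ)-1] (H ∪ H') := (measure_union hdisj hmeasH').symm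
      _ ≤ μH[(d:ℝ)-1] S := measure_mono (by
          rintro ξ (⟨h, _⟩ | ⟨h, _⟩) <;> exact h)
  -- numeric bound
  have hnum : (A.toNNReal : ℝ≥0∞) ^ ((d:ℝ)-1) ≤
      ENNReal.ofReal 2 * ENNReal.ofReal (Real.exp (-((d:ℝ) * s) / 2)) := by
    have h1 : (A.toNNReal : ℝ≥0∞) = ENNReal.ofReal A := rfl
    rw [h1, ENNReal.ofReal_rpow_of_nonneg hA0 hd', ← ENNReal.ofReal_mul (by norm_num)]
    apply ENNReal.ofReal_le_ofReal
    have hz0 : (0:ℝ) ≤ 1 - s' := by linarith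
    have hAd : A ^ ((d:ℝ)-1) = (1 - s') ^ (((d:ℝ)-1) / 2) := by
      rw [hAs, Real.sqrt_eq_rpow, ← Real.rpow_mul hz0]
      congr 1
      ring
    rw [hAd]
    have h2 : (1 - s') ≤ Real.exp (-s') := by
      have := Real.add_one_le_exp (-s'); linarith
    have h3 : (1 - s') ^ (((d:ℝ)-1)/2) ≤ Real.exp (-s') ^ (((d:ℝ)-1)/2) :=
      Real.rpow_le_rpow hz0 h2 (by positivity)
    have h4 : Real.exp (-s') ^ (((d:ℝ)-1)/2) = Real.exp (-s' * (((d:ℝ)-1)/2)) :=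
      (Real.exp_mul _ _).symm
    have h5 : Real.exp (-s' * (((d:ℝ)-1)/2)) ≤ 2 * Real.exp (-((d:ℝ) * s)/2) := by
      rw [show (2:ℝ) * Real.exp (-((d:ℝ)*s)/2) = Real.exp (Real.log 2 + -((d:ℝ)*s)/2) by
        rw [Real.exp_add, Real.exp_log two_pos]]
      apply Real.exp_le_exp.2
      linarith [hkey]
    calc (1 - s') ^ (((d:ℝ)-1)/2) ≤ Real.exp (-s') ^ (((d:ℝ)-1)/2) := h3
      _ = Real.exp (-s' * (((d:ℝ)-1)/2)) := h4
      _ ≤ 2 * Real.exp (-((d:ℝ) * s)/2) := h5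
  -- final chain
  calc μH[(d:ℝ)-1] (S ∩ {ξ : E | a ≤ ⟪v, ξ⟫})
      ≤ μH[(d:ℝ)-1] (capmap v r l '' H) := measure_mono hsub
    _ ≤ (A.toNNReal : ℝ≥0∞) ^ ((d:ℝ)-1) * μH[(d:ℝ)-1] H := step2
    _ ≤ (ENNReal.ofReal 2 * ENNReal.ofReal (Real.exp (-((d:ℝ) * s) / 2))) * μH[(d:ℝ)-1] H :=
        mul_le_mul_left hnum _
    _ = ENNReal.ofReal (Real.exp (-((d:ℝ) * s) / 2)) * (μH[(d:ℝ)-1] H + μH[(d:ℝ)-1] H) := by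
        rw [ENNReal.ofReal_ofNat, two_mul]
        ring
    _ ≤ ENNReal.ofReal (Real.exp (-((d:ℝ) * s) / 2)) * μH[(d:ℝ)-1] S :=
        mul_le_mul_right htwo _
end GeomAux

open MeasureTheory Metric Real RealInnerProductSpace ENNReal

/-- The uniform (normalized Hausdorff surface) probability measure on the sphere of
radius `r` centered at `x` in `ℝ^d`. -/
noncomputable def uniformSphereMeasure (d : ℕ) (x : EuclideanSpace ℝ (Fin d)) (r : ℝ) :
    Measure (EuclideanSpace ℝ (Fin d)) :=
  (μH[(d : ℝ) - 1] (sphere x r))⁻¹ • (μH[(d : ℝ) - 1]).restrict (sphere x r)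

/-- If `C` is an intersection of `m` closed half-spaces with unit normals, `x` is an
interior point of `C` with `a = min_i |⟪v i, x⟫ + b i| > 0`, and `ξ` is uniform on the
centered sphere of radius `r > 0`, then
`P[x + ξ ∉ C] ≤ m exp (-d a^2 / (2 r^2))`. -/
theorem prob_escape_convex_cell_le (d m : ℕ)
    (v : Fin m → EuclideanSpace ℝ (Fin d)) (hv : ∀ i, ‖v i‖ = 1) (b : Fin m → ℝ)
    (C : Set (EuclideanSpace ℝ (Fin d)))
    (hC : C = {z | ∀ i, ⟪v i, z⟫ + b i ≤ 0})
    (x : EuclideanSpace ℝ (Fin d)) (hx : x ∈ interior C)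
    (a : ℝ) (ha : IsLeast (Set.range fun i => |⟪v i, x⟫ + b i|) a) (ha0 : 0 < a)
    (r : ℝ) (hr : 0 < r) :
    uniformSphereMeasure d 0 r {ξ | x + ξ ∉ C} ≤
      (m : ℝ≥0∞) * ENNReal.ofReal (Real.exp (-((d : ℝ) * a ^ 2) / (2 * r ^ 2))) := by
  set S : Set (EuclideanSpace ℝ (Fin d)) := sphere 0 r with hS
  set bad : Set (EuclideanSpace ℝ (Fin d)) := {ξ | x + ξ ∉ C} with hbad
  set K : ℝ≥0∞ := ENNReal.ofReal (Real.exp (-((d : ℝ) * a ^ 2) / (2 * r ^ 2))) with hK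
  have hLHS : uniformSphereMeasure d 0 r bad =
      (μH[(d:ℝ)-1] S)⁻¹ * μH[(d:ℝ)-1] (bad ∩ S) := by
    rw [uniformSphereMeasure, Measure.smul_apply, smul_eq_mul,
      Measure.restrict_apply' isClosed_sphere.measurableSet]
  -- distances from x to hyperplanes
  have hxC : ∀ i, ⟪v i, x⟫ + b i ≤ -a := by
    intro i
    have hmem : x ∈ C := interior_subset hx
    rw [hC] at hmem
    have hle : ⟪v i, x⟫ + b i ≤ 0 := hmem i
    have habs : a ≤ |⟪v i, x⟫ + b i| := ha.2 (Set.mem_range_self i)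
    rcases abs_cases (⟪v i, x⟫ + b i) with ⟨h, _⟩ | ⟨h, _⟩
    · linarith [h ▸ habs]
    · linarith [h ▸ habs]
  by_cases har : a ≤ r
  · -- main case; also handle d = 0
    rcases Nat.eq_zero_or_pos d with hd0 | hd
    · subst hd0
      have hSempty : S = ∅ := by
        rw [hS]
        ext ξ
        simp only [mem_sphere_zero_iff_norm, Set.mem_empty_iff_false, iff_false]
        have : ξ = 0 := Subsingleton.elim ξ 0
        rw [this, norm_zero]
        exact fun h => absurd h.symm (ne_of_gt hr)
      rw [hLHS, hSempty]
      simp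
    · -- union bound
      have hsub : bad ∩ S ⊆ ⋃ i, (S ∩ {ξ | a ≤ ⟪v i, ξ⟫}) := by
        rintro ξ ⟨hξb, hξS⟩
        have : ¬ (∀ i, ⟪v i, x + ξ⟫ + b i ≤ 0) := by
          intro h
          exact hξb (by rw [hC]; exact h)
        push_neg at this
        obtain ⟨i, hi⟩ := this
        refine Set.mem_iUnion.2 ⟨i, hξS, ?_⟩
        rw [Set.mem_setOf_eq]
        rw [inner_add_right] at hi
        linarith [hxC i]
      have hcap : ∀ i : Fin m, μH[(d:ℝ)-1] (S ∩ {ξ | a ≤ ⟪v i, ξ⟫}) ≤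
          K * μH[(d:ℝ)-1] S := by
        intro i
        have h := cap_measure_le d hd (v i) (hv i) hr ha0 har
        have hKK : ENNReal.ofReal (Real.exp (-((d:ℝ) * (a/r)^2) / 2)) = K := by
          rw [hK]
          congr 1
          rw [div_pow]
          field_simp
        rwa [hKK] at h
      have hsum : μH[(d:ℝ)-1] (bad ∩ S) ≤ (m : ℝ≥0∞) * (K * μH[(d:ℝ)-1] S) := by
        calc μH[(d:ℝ)-1] (bad ∩ S) ≤ μH[(d:ℝ)-1] (⋃ i, (S ∩ {ξ | a ≤ ⟪v i, ξ⟫})) :=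
              measure_mono hsub
          _ ≤ ∑' i : Fin m, μH[(d:ℝ)-1] (S ∩ {ξ | a ≤ ⟪v i, ξ⟫}) := measure_iUnion_le _
          _ ≤ ∑' _i : Fin m, (K * μH[(d:ℝ)-1] S) := ENNReal.tsum_le_tsum hcap
          _ = (m : ℝ≥0∞) * (K * μH[(d:ℝ)-1] S) := by
              rw [tsum_fintype]
              simp [Finset.sum_const, Finset.card_univ]
      rw [hLHS]
      calc (μH[(d:ℝ)-1] S)⁻¹ * μH[(d:ℝ)-1] (bad ∩ S)
          ≤ (μH[(d:ℝ)-1] S)⁻¹ * ((m : ℝ≥0∞) * (K * μH[(d:ℝ)-1] S)) :=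
            mul_le_mul_right hsum _
        _ = (m : ℝ≥0∞) * K * ((μH[(d:ℝ)-1] S)⁻¹ * μH[(d:ℝ)-1] S) := by ring
        _ ≤ (m : ℝ≥0∞) * K * 1 := by
            apply mul_le_mul_right
            rcases eq_or_ne (μH[(d:ℝ)-1] S) 0 with h | h
            · rw [h]; simp
            rcases eq_or_ne (μH[(d:ℝ)-1] S) ⊤ with h' | h'
            · rw [h']; simp
            · rw [ENNReal.inv_mul_cancel h h']
        _ = (m : ℝ≥0∞) * K := mul_one _
  · -- a > r : the bad set misses the sphere entirely
    push_neg at har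
    have hempty : bad ∩ S = ∅ := by
      ext ξ
      simp only [Set.mem_inter_iff, Set.mem_empty_iff_false, iff_false, not_and]
      intro hξb hξS
      apply hξb
      rw [hC]
      intro i
      have hir : ⟪v i, ξ⟫ ≤ r := by
        have h := real_inner_le_norm (v i) ξ
        rwa [hv i, mem_sphere_zero_iff_norm.1 hξS, one_mul] at h
      rw [inner_add_right]
      linarith [hxC i]
    rw [hLHS, hempty]
    simp
end

section
/- Let f_N : ℝ^d → {0,1} be the input-output function of a network with L - 1 ReLU hidden layers (total of n_hidden hidden units) and one Heaviside output unit. Then there is a partition of ℝ^d into convex sets, each of which is an intersection of at most n := n_hidden + 1 half-spaces, such that f_N is constant on each set of the partition. -/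
open RealInnerProductSpace

/-- The Heaviside function: `θ t = 1` for `t > 0` and `θ t = 0` for `t ≤ 0`. -/
noncomputable def heaviside (t : ℝ) : ℝ := if 0 < t then 1 else 0

/-- Outputs of the successive layers of a ReLU network on input `x ∈ ℝ^d`.
`n l` is the number of units of layer `l` (with `n 0 = d` for the input layer),
`v l k j` is the weight of unit `k` of layer `l` on coordinate `j` of the previous
layer, and `b l k` its bias. -/
noncomputable def reluLayerOutputs (d : ℕ) (n : ℕ → ℕ) (v : ℕ → ℕ → ℕ → ℝ)
    (b : ℕ → ℕ → ℝ) : ℕ → EuclideanSpace ℝ (Fin d) → ℕ → ℝ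
  | 0, x, k => if h : k < d then x ⟨k, h⟩ else 0
  | l + 1, x, k =>
      max ((∑ j ∈ Finset.range (n l), v (l + 1) k j * reluLayerOutputs d n v b l x j)
        + b (l + 1) k) 0

/-- A half-space of `ℝ^d` (closed negative or open positive). -/
def IsHalfspace {d : ℕ} (S : Set (EuclideanSpace ℝ (Fin d))) : Prop :=
  ∃ (w : EuclideanSpace ℝ (Fin d)) (c : ℝ),
    S = {z | ⟪w, z⟫ + c ≤ 0} ∨ S = {z | 0 < ⟪w, z⟫ + c}

namespace ReluNet

variable (d : ℕ) (n : ℕ → ℕ) (v : ℕ → ℕ → ℕ → ℝ) (b : ℕ → ℕ → ℝ)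
  (vout : ℕ → ℝ) (bout : ℝ)

/-- Evaluation of an affine function given by (weights, constant). -/
noncomputable def ev (p : EuclideanSpace ℝ (Fin d) × ℝ) (x : EuclideanSpace ℝ (Fin d)) : ℝ :=
  ⟪p.1, x⟫ + p.2

/-- Preactivation of unit `k` of layer `l+1`. -/
noncomputable def netPre (l k : ℕ) (x : EuclideanSpace ℝ (Fin d)) : ℝ :=
  (∑ j ∈ Finset.range (n l), v (l + 1) k j * reluLayerOutputs d n v b l x j) + b (l + 1) k

lemma relu_succ (l k : ℕ) (x : EuclideanSpace ℝ (Fin d)) :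
    reluLayerOutputs d n v b (l + 1) x k = max (netPre d n v b l k x) 0 := rfl

/-- Output of unit `k` of layer `l` as an affine function, under sign pattern `σ`. -/
noncomputable def aff (σ : ℕ → ℕ → Bool) : ℕ → ℕ → EuclideanSpace ℝ (Fin d) × ℝ
  | 0, k => (if h : k < d then EuclideanSpace.single ⟨k, h⟩ (1 : ℝ) else 0, 0)
  | l + 1, k =>
      if σ (l + 1) k then
        (∑ j ∈ Finset.range (n l), v (l + 1) k j • (aff σ l j).1,
         (∑ j ∈ Finset.range (n l), v (l + 1) k j * (aff σ l j).2) + b (l + 1) k)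
      else (0, 0)

/-- Preactivation of unit `k` of layer `l+1` as an affine function. -/
noncomputable def preAff (σ : ℕ → ℕ → Bool) (l k : ℕ) : EuclideanSpace ℝ (Fin d) × ℝ :=
  (∑ j ∈ Finset.range (n l), v (l + 1) k j • (aff d n v b σ l j).1,
   (∑ j ∈ Finset.range (n l), v (l + 1) k j * (aff d n v b σ l j).2) + b (l + 1) k)

lemma aff_zero (σ : ℕ → ℕ → Bool) (k : ℕ) :
    aff d n v b σ 0 k = (if h : k < d then EuclideanSpace.single ⟨k, h⟩ (1 : ℝ) else 0, 0) := by
  rw [aff]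

lemma aff_succ (σ : ℕ → ℕ → Bool) (l k : ℕ) :
    aff d n v b σ (l + 1) k = if σ (l + 1) k then preAff d n v b σ l k else (0, 0) := by
  rw [aff, preAff]

lemma ev_sum (s : Finset ℕ) (c : ℕ → ℝ) (p : ℕ → EuclideanSpace ℝ (Fin d) × ℝ) (b0 : ℝ)
    (x : EuclideanSpace ℝ (Fin d)) :
    ev d (∑ j ∈ s, c j • (p j).1, (∑ j ∈ s, c j * (p j).2) + b0) x
      = (∑ j ∈ s, c j * ev d (p j) x) + b0 := by
  simp only [ev, sum_inner, real_inner_smul_left, mul_add, Finset.sum_add_distrib]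
  ring

lemma ev_preAff (σ : ℕ → ℕ → Bool) (l k : ℕ) (x : EuclideanSpace ℝ (Fin d)) :
    ev d (preAff d n v b σ l k) x
      = (∑ j ∈ Finset.range (n l), v (l + 1) k j * ev d (aff d n v b σ l j) x) + b (l + 1) k :=
  ev_sum d _ _ _ _ x

lemma netPre_eq (σ : ℕ → ℕ → Bool) (l : ℕ) (x : EuclideanSpace ℝ (Fin d))
    (h : ∀ j < n l, reluLayerOutputs d n v b l x j = ev d (aff d n v b σ l j) x) (k : ℕ) :
    netPre d n v b l k x = ev d (preAff d n v b σ l k) x := by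
  rw [ev_preAff, netPre]
  congr 1
  exact Finset.sum_congr rfl fun j hj => by rw [h j (Finset.mem_range.mp hj)]

/-- Main lemma: if the signs of the preactivations match `σ` up to layer `l0`, then
the outputs of layer `l0` are given by the affine functions `aff`. -/
lemma outputs_eq (hn0 : n 0 = d) (σ : ℕ → ℕ → Bool) (x : EuclideanSpace ℝ (Fin d)) :
    ∀ l0, (∀ l < l0, ∀ k < n (l + 1), (σ (l + 1) k = true ↔ 0 < netPre d n v b l k x)) →
      ∀ k < n l0, reluLayerOutputs d n v b l0 x k = ev d (aff d n v b σ l0 k) x := by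
  intro l0
  induction l0 with
  | zero =>
      intro _ k hk
      have hkd : k < d := hn0 ▸ hk
      rw [aff_zero]
      simp [reluLayerOutputs, ev, hkd, EuclideanSpace.inner_single_left]
  | succ l ih =>
      intro h k hk
      have houts := ih fun l' hl' => h l' (Nat.lt_succ_of_lt hl')
      have hpre : netPre d n v b l k x = ev d (preAff d n v b σ l k) x :=
        netPre_eq d n v b σ l x houts k
      rw [relu_succ, aff_succ]
      rcases hσ : σ (l + 1) k with _ | _
      · have hle : ¬ 0 < netPre d n v b l k x := by
          intro hc
          exact absurd ((h l (Nat.lt_succ_self l) k hk).mpr hc) (by simp [hσ])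
        rw [if_neg Bool.false_ne_true]
        rw [max_eq_right (not_lt.mp hle)]
        simp [ev]
      · have hpos : 0 < netPre d n v b l k x := (h l (Nat.lt_succ_self l) k hk).mp hσ
        rw [if_pos rfl, max_eq_left hpos.le, hpre]

/-- The canonical sign pattern of an input `x`. -/
noncomputable def sgn (x : EuclideanSpace ℝ (Fin d)) (l k : ℕ) : Bool :=
  decide (0 < netPre d n v b (l - 1) k x)

lemma sgn_spec (x : EuclideanSpace ℝ (Fin d)) (l k : ℕ) :
    sgn d n v b x (l + 1) k = true ↔ 0 < netPre d n v b l k x := by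
  simp only [sgn, Nat.add_sub_cancel, decide_eq_true_eq]

/-- Output-unit preactivation, where `M` is the index of the last hidden layer. -/
noncomputable def netOut (M : ℕ) (x : EuclideanSpace ℝ (Fin d)) : ℝ :=
  (∑ j ∈ Finset.range (n M), vout j * reluLayerOutputs d n v b M x j) + bout

/-- Output-unit preactivation as an affine function. -/
noncomputable def outAff (M : ℕ) (σ : ℕ → ℕ → Bool) : EuclideanSpace ℝ (Fin d) × ℝ :=
  (∑ j ∈ Finset.range (n M), vout j • (aff d n v b σ M j).1,
   (∑ j ∈ Finset.range (n M), vout j * (aff d n v b σ M j).2) + bout)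

lemma netOut_eq (M : ℕ) (σ : ℕ → ℕ → Bool) (x : EuclideanSpace ℝ (Fin d))
    (h : ∀ j < n M, reluLayerOutputs d n v b M x j = ev d (aff d n v b σ M j) x) :
    netOut d n v b vout bout M x = ev d (outAff d n v b vout bout M σ) x := by
  rw [outAff, ev_sum, netOut]
  congr 1
  exact Finset.sum_congr rfl fun j hj => by rw [h j (Finset.mem_range.mp hj)]

/-- A half-space given by an affine function and a sign. -/
noncomputable def HS (p : EuclideanSpace ℝ (Fin d) × ℝ) (s : Bool) :
    Set (EuclideanSpace ℝ (Fin d)) :=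
  if s then {x | 0 < ev d p x} else {x | ev d p x ≤ 0}

lemma HS_false (p : EuclideanSpace ℝ (Fin d) × ℝ) :
    HS d p false = {x | ev d p x ≤ 0} := by
  simp [HS]

lemma HS_true (p : EuclideanSpace ℝ (Fin d) × ℝ) :
    HS d p true = {x | 0 < ev d p x} := by
  simp [HS]

lemma isHalfspace_HS (p : EuclideanSpace ℝ (Fin d) × ℝ) (s : Bool) :
    IsHalfspace (HS d p s) := by
  refine ⟨p.1, p.2, ?_⟩
  cases s
  · left; rw [HS_false]; rfl
  · right; rw [HS_true]; rfl

lemma mem_HS (p : EuclideanSpace ℝ (Fin d) × ℝ) (s : Bool) (x : EuclideanSpace ℝ (Fin d)) :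
    x ∈ HS d p s ↔ (0 < ev d p x ↔ s = true) := by
  cases s <;> simp [HS, not_lt]

lemma convex_HS (p : EuclideanSpace ℝ (Fin d) × ℝ) (s : Bool) : Convex ℝ (HS d p s) := by
  have hlin : IsLinearMap ℝ fun z : EuclideanSpace ℝ (Fin d) => (⟪p.1, z⟫ : ℝ) :=
    ⟨fun y z => inner_add_right _ _ _, fun c z => real_inner_smul_right _ _ _⟩
  cases s
  · have heq : HS d p false = {w | (⟪p.1, w⟫ : ℝ) ≤ -p.2} := by
      rw [HS_false]; ext z; simp only [Set.mem_setOf_eq, ev]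
      constructor <;> intro <;> linarith
    rw [heq]
    exact convex_halfSpace_le (𝕜 := ℝ) hlin (-p.2)
  · have heq : HS d p true = {w | -p.2 < (⟪p.1, w⟫ : ℝ)} := by
      rw [HS_true]; ext z; simp only [Set.mem_setOf_eq, ev]
      constructor <;> intro <;> linarith
    rw [heq]
    exact convex_halfSpace_gt (𝕜 := ℝ) hlin (-p.2)

/-- The list of half-spaces cutting out the region of sign pattern `(σ, t)`. -/
noncomputable def hsList (M : ℕ) (σ : ℕ → ℕ → Bool) (t : Bool) :
    List (Set (EuclideanSpace ℝ (Fin d))) :=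
  ((List.range M).flatMap fun l =>
    (List.range (n (l + 1))).map fun k => HS d (preAff d n v b σ l k) (σ (l + 1) k))
  ++ [HS d (outAff d n v b vout bout M σ) t]

lemma mem_hsList (M : ℕ) (σ : ℕ → ℕ → Bool) (t : Bool)
    (T : Set (EuclideanSpace ℝ (Fin d))) :
    T ∈ hsList d n v b vout bout M σ t ↔
      (∃ l < M, ∃ k < n (l + 1), T = HS d (preAff d n v b σ l k) (σ (l + 1) k)) ∨
        T = HS d (outAff d n v b vout bout M σ) t := by
  simp only [hsList, List.mem_append, List.mem_flatMap, List.mem_map, List.mem_range,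
    List.mem_singleton]
  constructor
  · rintro (⟨l, hl, k, hk, rfl⟩ | rfl)
    · exact Or.inl ⟨l, hl, k, hk, rfl⟩
    · exact Or.inr rfl
  · rintro (⟨l, hl, k, hk, rfl⟩ | rfl)
    · exact Or.inl ⟨l, hl, k, hk, rfl⟩
    · exact Or.inr rfl

/-- The region associated to sign pattern `(σ, t)`. -/
noncomputable def region (M : ℕ) (σ : ℕ → ℕ → Bool) (t : Bool) :
    Set (EuclideanSpace ℝ (Fin d)) :=
  {x | ∀ T ∈ hsList d n v b vout bout M σ t, x ∈ T}

lemma mem_region (M : ℕ) (σ : ℕ → ℕ → Bool) (t : Bool) (x : EuclideanSpace ℝ (Fin d)) :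
    x ∈ region d n v b vout bout M σ t ↔
      (∀ l < M, ∀ k < n (l + 1), x ∈ HS d (preAff d n v b σ l k) (σ (l + 1) k)) ∧
        x ∈ HS d (outAff d n v b vout bout M σ) t := by
  constructor
  · intro h
    refine ⟨fun l hl k hk => h _ ?_, h _ ?_⟩
    · exact (mem_hsList d n v b vout bout M σ t _).mpr (Or.inl ⟨l, hl, k, hk, rfl⟩)
    · exact (mem_hsList d n v b vout bout M σ t _).mpr (Or.inr rfl)
  · rintro ⟨h1, h2⟩ T hT
    rcases (mem_hsList d n v b vout bout M σ t T).mp hT with ⟨l, hl, k, hk, rfl⟩ | rfl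
    · exact h1 l hl k hk
    · exact h2

lemma region_eq_iInter (M : ℕ) (σ : ℕ → ℕ → Bool) (t : Bool) :
    region d n v b vout bout M σ t
      = ⋂ i : Fin (hsList d n v b vout bout M σ t).length,
          (hsList d n v b vout bout M σ t).get i := by
  ext x
  simp only [region, Set.mem_setOf_eq, Set.mem_iInter]
  constructor
  · intro h i
    exact h _ (List.get_mem _ _)
  · intro h T hT
    obtain ⟨i, rfl⟩ := List.mem_iff_get.mp hT
    exact h i

/-- The canonical output sign of an input. -/
noncomputable def tOut (M : ℕ) (x : EuclideanSpace ℝ (Fin d)) : Bool :=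
  decide (0 < netOut d n v b vout bout M x)

/-- Every point belongs to its canonical region. -/
lemma mem_region_self (hn0 : n 0 = d) (M : ℕ) (x : EuclideanSpace ℝ (Fin d)) :
    x ∈ region d n v b vout bout M (sgn d n v b x) (tOut d n v b vout bout M x) := by
  rw [mem_region]
  have hmatch : ∀ l0, ∀ l < l0, ∀ k < n (l + 1),
      (sgn d n v b x (l + 1) k = true ↔ 0 < netPre d n v b l k x) :=
    fun l0 l _ k _ => sgn_spec d n v b x l k
  have houts : ∀ l0, ∀ k < n l0,
      reluLayerOutputs d n v b l0 x k = ev d (aff d n v b (sgn d n v b x) l0 k) x :=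
    fun l0 => outputs_eq d n v b hn0 (sgn d n v b x) x l0 (hmatch l0)
  constructor
  · intro l hl k hk
    rw [mem_HS]
    rw [← netPre_eq d n v b (sgn d n v b x) l x (houts l) k]
    exact (sgn_spec d n v b x l k).symm
  · rw [mem_HS, ← netOut_eq d n v b vout bout M (sgn d n v b x) x (houts M)]
    simp [tOut]

/-- On a region, the preactivations are given by the affine functions. -/
lemma netPre_eq_of_mem (hn0 : n 0 = d) (M : ℕ) (σ : ℕ → ℕ → Bool) (t : Bool)
    (x : EuclideanSpace ℝ (Fin d)) (hx : x ∈ region d n v b vout bout M σ t) :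
    ∀ l0 ≤ M, ∀ k, netPre d n v b l0 k x = ev d (preAff d n v b σ l0 k) x := by
  obtain ⟨h1, -⟩ := (mem_region d n v b vout bout M σ t x).mp hx
  intro l0
  induction l0 using Nat.strong_induction_on with
  | _ l0 IH =>
    intro hl0 k
    refine netPre_eq d n v b σ l0 x ?_ k
    refine outputs_eq d n v b hn0 σ x l0 ?_
    intro l hl k' hk'
    have hlM : l < M := lt_of_lt_of_le hl hl0
    have hmem := h1 l hlM k' hk'
    rw [mem_HS] at hmem
    rw [IH l hl (le_of_lt (lt_of_lt_of_le hl hl0)) k']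
    exact hmem.symm

lemma outputs_eq_of_mem (hn0 : n 0 = d) (M : ℕ) (σ : ℕ → ℕ → Bool) (t : Bool)
    (x : EuclideanSpace ℝ (Fin d)) (hx : x ∈ region d n v b vout bout M σ t) :
    ∀ l0 ≤ M, ∀ k < n l0,
      reluLayerOutputs d n v b l0 x k = ev d (aff d n v b σ l0 k) x := by
  obtain ⟨h1, -⟩ := (mem_region d n v b vout bout M σ t x).mp hx
  intro l0 hl0
  refine outputs_eq d n v b hn0 σ x l0 ?_
  intro l hl k' hk'
  have hmem := h1 l (lt_of_lt_of_le hl hl0) k' hk'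
  rw [mem_HS] at hmem
  rw [netPre_eq_of_mem d n v b vout bout hn0 M σ t x hx l (le_of_lt (lt_of_lt_of_le hl hl0)) k']
  exact hmem.symm

/-- On a region, the function value is constant. -/
lemma netOut_eq_of_mem (hn0 : n 0 = d) (M : ℕ) (σ : ℕ → ℕ → Bool) (t : Bool)
    (x : EuclideanSpace ℝ (Fin d)) (hx : x ∈ region d n v b vout bout M σ t) :
    netOut d n v b vout bout M x = ev d (outAff d n v b vout bout M σ) x :=
  netOut_eq d n v b vout bout M σ x
    (outputs_eq_of_mem d n v b vout bout hn0 M σ t x hx M le_rfl)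

lemma heaviside_on_region (hn0 : n 0 = d) (M : ℕ) (σ : ℕ → ℕ → Bool) (t : Bool)
    (x : EuclideanSpace ℝ (Fin d)) (hx : x ∈ region d n v b vout bout M σ t) :
    heaviside (netOut d n v b vout bout M x) = if t then 1 else 0 := by
  obtain ⟨-, h2⟩ := (mem_region d n v b vout bout M σ t x).mp hx
  rw [mem_HS] at h2
  rw [← netOut_eq_of_mem d n v b vout bout hn0 M σ t x hx] at h2
  cases t
  · simp only [Bool.false_eq_true, iff_false] at h2
    simp [heaviside, h2]
  · simp only [iff_true] at h2
    simp [heaviside, h2]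

/-- `aff` only depends on the relevant entries of the sign pattern. -/
lemma aff_congr (M : ℕ) (σ σ' : ℕ → ℕ → Bool)
    (hagree : ∀ l < M, ∀ k < n (l + 1), σ (l + 1) k = σ' (l + 1) k) :
    ∀ l ≤ M, ∀ k < n l, aff d n v b σ l k = aff d n v b σ' l k := by
  intro l
  induction l with
  | zero => intro _ k _; rw [aff_zero, aff_zero]
  | succ l ih =>
    intro hl k hk
    have hlM : l < M := hl
    rw [aff, aff, hagree l hlM k hk]
    rcases σ' (l + 1) k with _ | _
    · rfl
    · simp only [if_pos]
      have hsum : ∀ j ∈ Finset.range (n l), aff d n v b σ l j = aff d n v b σ' l j :=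
        fun j hj => ih (le_of_lt hl) j (Finset.mem_range.mp hj)
      congr 1
      · exact Finset.sum_congr rfl fun j hj => by rw [hsum j hj]
      · congr 1
        exact Finset.sum_congr rfl fun j hj => by rw [hsum j hj]

lemma preAff_congr (M : ℕ) (σ σ' : ℕ → ℕ → Bool)
    (hagree : ∀ l < M, ∀ k < n (l + 1), σ (l + 1) k = σ' (l + 1) k)
    (l : ℕ) (hl : l ≤ M) (k : ℕ) :
    preAff d n v b σ l k = preAff d n v b σ' l k := by
  have hsum : ∀ j ∈ Finset.range (n l), aff d n v b σ l j = aff d n v b σ' l j :=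
    fun j hj => aff_congr d n v b M σ σ' hagree l hl j (Finset.mem_range.mp hj)
  rw [preAff, preAff]
  congr 1
  · exact Finset.sum_congr rfl fun j hj => by rw [hsum j hj]
  · congr 1
    exact Finset.sum_congr rfl fun j hj => by rw [hsum j hj]

lemma outAff_congr (M : ℕ) (σ σ' : ℕ → ℕ → Bool)
    (hagree : ∀ l < M, ∀ k < n (l + 1), σ (l + 1) k = σ' (l + 1) k) :
    outAff d n v b vout bout M σ = outAff d n v b vout bout M σ' := by
  have hsum : ∀ j ∈ Finset.range (n M), aff d n v b σ M j = aff d n v b σ' M j :=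
    fun j hj => aff_congr d n v b M σ σ' hagree M le_rfl j (Finset.mem_range.mp hj)
  rw [outAff, outAff]
  congr 1
  · exact Finset.sum_congr rfl fun j hj => by rw [hsum j hj]
  · congr 1
    exact Finset.sum_congr rfl fun j hj => by rw [hsum j hj]

lemma hsList_congr (M : ℕ) (σ σ' : ℕ → ℕ → Bool) (t : Bool)
    (hagree : ∀ l < M, ∀ k < n (l + 1), σ (l + 1) k = σ' (l + 1) k) :
    hsList d n v b vout bout M σ t = hsList d n v b vout bout M σ' t := by
  rw [hsList, hsList, outAff_congr d n v b vout bout M σ σ' hagree]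
  congr 1
  rw [List.flatMap_def, List.flatMap_def]
  congr 1
  refine List.map_congr_left fun l hl => ?_
  have hlM : l < M := List.mem_range.mp hl
  refine List.map_congr_left fun k hk => ?_
  have hkn : k < n (l + 1) := List.mem_range.mp hk
  rw [preAff_congr d n v b M σ σ' hagree l (le_of_lt hlM) k, hagree l hlM k hkn]

/-- Any region containing `x` is the canonical region of `x`. -/
lemma region_eq_canonical (hn0 : n 0 = d) (M : ℕ) (σ : ℕ → ℕ → Bool) (t : Bool)
    (x : EuclideanSpace ℝ (Fin d)) (hx : x ∈ region d n v b vout bout M σ t) :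
    region d n v b vout bout M σ t
      = region d n v b vout bout M (sgn d n v b x) (tOut d n v b vout bout M x) := by
  obtain ⟨h1, h2⟩ := (mem_region d n v b vout bout M σ t x).mp hx
  have hagree : ∀ l < M, ∀ k < n (l + 1), σ (l + 1) k = sgn d n v b x (l + 1) k := by
    intro l hl k hk
    have hmem := h1 l hl k hk
    rw [mem_HS] at hmem
    rw [← netPre_eq_of_mem d n v b vout bout hn0 M σ t x hx l (le_of_lt hl) k] at hmem
    rw [Bool.eq_iff_iff, sgn_spec]
    exact hmem.symm
  have ht : t = tOut d n v b vout bout M x := by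
    rw [mem_HS] at h2
    rw [← netOut_eq_of_mem d n v b vout bout hn0 M σ t x hx] at h2
    rw [Bool.eq_iff_iff]
    simp only [tOut, decide_eq_true_eq]
    exact h2.symm
  rw [region, region, hsList_congr d n v b vout bout M σ (sgn d n v b x) t hagree, ht]

lemma length_hsList (M : ℕ) (σ : ℕ → ℕ → Bool) (t : Bool) :
    (hsList d n v b vout bout M σ t).length = (∑ l ∈ Finset.range M, n (l + 1)) + 1 := by
  rw [hsList, List.length_append, List.length_flatMap]
  simp only [List.length_singleton]
  congr 1
  induction M with
  | zero => simp
  | succ M ih =>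
      rw [List.range_succ, List.map_append, List.sum_append, ih, Finset.sum_range_succ]
      simp

end ReluNet


/-- The input-output function of a network with `L - 1` ReLU hidden layers (with
`nHidden` hidden units in total) and a single Heaviside output unit is piecewise
constant: there is a partition of `ℝ^d` into convex sets, each an intersection of at
most `nHidden + 1` half-spaces, on each of which the function is constant. -/
theorem relu_heaviside_network_piecewise_constant (d L : ℕ) (hL : 1 ≤ L)
    (n : ℕ → ℕ) (hn0 : n 0 = d) (v : ℕ → ℕ → ℕ → ℝ) (b : ℕ → ℕ → ℝ)
    (vout : ℕ → ℝ) (bout : ℝ) (nHidden : ℕ)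
    (hnHidden : nHidden = ∑ l ∈ Finset.Ico 1 L, n l)
    (f : EuclideanSpace ℝ (Fin d) → ℝ)
    (hf : ∀ x, f x = heaviside
      ((∑ j ∈ Finset.range (n (L - 1)), vout j * reluLayerOutputs d n v b (L - 1) x j)
        + bout)) :
    ∃ P : Set (Set (EuclideanSpace ℝ (Fin d))),
      (∀ D ∈ P, Convex ℝ D) ∧
      ⋃₀ P = Set.univ ∧
      (P.Pairwise fun D D' => Disjoint D D') ∧
      (∀ D ∈ P, ∃ c : ℝ, ∀ z ∈ D, f z = c) ∧
      (∀ D ∈ P, ∃ m : ℕ, m ≤ nHidden + 1 ∧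
        ∃ S : Fin m → Set (EuclideanSpace ℝ (Fin d)),
          (∀ i, IsHalfspace (S i)) ∧ D = ⋂ i, S i) := by
  classical
  open ReluNet in
  set M := L - 1 with hM
  -- the partition into canonical regions
  refine ⟨Set.range (fun x => region d n v b vout bout M (sgn d n v b x)
      (tOut d n v b vout bout M x)), ?_, ?_, ?_, ?_, ?_⟩
  · -- convexity
    rintro D ⟨x0, rfl⟩
    dsimp only
    rw [region_eq_iInter]
    refine convex_iInter fun i => ?_
    obtain ⟨iv, hiv⟩ := i
    have hmem := List.get_mem (hsList d n v b vout bout M (sgn d n v b x0)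
      (tOut d n v b vout bout M x0)) ⟨iv, hiv⟩
    rcases (mem_hsList d n v b vout bout M _ _ _).mp hmem with ⟨l, hl, k, hk, heq⟩ | heq <;>
      rw [heq] <;> exact convex_HS d _ _
  · -- covering
    ext x
    simp only [Set.mem_sUnion, Set.mem_range, exists_exists_eq_and, Set.mem_univ, iff_true]
    exact ⟨x, mem_region_self d n v b vout bout hn0 M x⟩
  · -- disjointness
    rintro D1 ⟨x1, rfl⟩ D2 ⟨x2, rfl⟩ hne
    rw [Set.disjoint_left]
    intro z hz1 hz2
    exact hne ((region_eq_canonical d n v b vout bout hn0 M _ _ z hz1).trans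
      (region_eq_canonical d n v b vout bout hn0 M _ _ z hz2).symm)
  · -- constancy
    rintro D ⟨x0, rfl⟩
    dsimp only
    refine ⟨if tOut d n v b vout bout M x0 then 1 else 0, fun z hz => ?_⟩
    have h1 : f z = heaviside (netOut d n v b vout bout M z) := hf z
    rw [h1]
    exact heaviside_on_region d n v b vout bout hn0 M _ _ z hz
  · -- half-space description
    rintro D ⟨x0, rfl⟩
    dsimp only
    refine ⟨(hsList d n v b vout bout M (sgn d n v b x0)
        (tOut d n v b vout bout M x0)).length, ?_, fun i =>
        (hsList d n v b vout bout M (sgn d n v b x0)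
        (tOut d n v b vout bout M x0)).get i, ?_, region_eq_iInter d n v b vout bout M _ _⟩
    · rw [length_hsList, hnHidden, Finset.sum_Ico_eq_sum_range]
      simp [Nat.add_comm]
      exact le_rfl
    · rintro ⟨iv, hiv⟩
      dsimp only
      have hmem := List.get_mem (hsList d n v b vout bout M (sgn d n v b x0)
        (tOut d n v b vout bout M x0)) ⟨iv, hiv⟩
      rcases (mem_hsList d n v b vout bout M _ _ _).mp hmem with ⟨l, hl, k, hk, heq⟩ | heq <;>
        rw [heq] <;> exact isHalfspace_HS d _ _
end

section
/- For a deep ReLU network with a Heaviside output and total unit count n, and any input x whose distance from the face-set H (the union of region boundaries) exceeds the perturbation radius r, every perturbed input x + ξ with ‖ξ‖ ≤ r satisfies f_N(x + ξ) = f_N(x); i.e., no adversarial example exists within the closed ball of radius r around x. -/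
open Metric

lemma connected_cross_frontier {α : Type*} [TopologicalSpace α] {s t : Set α}
    (hs : IsPreconnected s) (h1 : (s ∩ t).Nonempty) (h2 : (s \ t).Nonempty) :
    (s ∩ frontier t).Nonempty := by
  by_contra h
  rw [Set.not_nonempty_iff_eq_empty] at h
  have hsub : s ⊆ interior t ∪ interior tᶜ := by
    intro z hz
    have hznf : z ∉ frontier t := fun hf => (Set.eq_empty_iff_forall_notMem.1 h z ⟨hz, hf⟩)
    rcases Classical.em (z ∈ closure t) with hc | hc
    · left
      by_contra hi
      exact hznf ⟨hc, hi⟩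
    · right
      rwa [interior_compl, Set.mem_compl_iff]
  have hdisj : Disjoint (interior t) (interior tᶜ) := by
    rw [interior_compl]
    exact disjoint_compl_right.mono interior_subset (Set.compl_subset_compl.2 subset_closure)
  rcases hs.subset_or_subset isOpen_interior isOpen_interior hdisj hsub with hst | hst
  · obtain ⟨z, hzs, hzt⟩ := h2
    exact hzt (interior_subset (hst hzs))
  · obtain ⟨z, hzs, hzt⟩ := h1
    have := hst hzs
    rw [interior_compl, Set.mem_compl_iff] at this
    exact this (subset_closure hzt)

/-- No adversarial examples far from the face set: if `ℝ^d` partitions into convex sets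
on each of which the network's I/O function `f` is constant, with all region boundaries
contained in a set `H`, then for any input `x` whose distance from `H` exceeds the
perturbation radius `r ≥ 0`, every perturbation `ξ` with `‖ξ‖ ≤ r` leaves the output
unchanged: `f (x + ξ) = f x`. -/
theorem no_adversarial_in_ball (d : ℕ) (f : EuclideanSpace ℝ (Fin d) → ℝ)
    (P : Set (Set (EuclideanSpace ℝ (Fin d))))
    (hcover : ⋃₀ P = Set.univ)
    (hconv : ∀ D ∈ P, Convex ℝ D)
    (hconst : ∀ D ∈ P, ∀ x ∈ D, ∀ y ∈ D, f x = f y)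
    (H : Set (EuclideanSpace ℝ (Fin d)))
    (hbd : ∀ D ∈ P, frontier D ⊆ H)
    (x : EuclideanSpace ℝ (Fin d)) (r : ℝ) (hr : 0 ≤ r)
    (hdist : r < infDist x H) :
    ∀ ξ : EuclideanSpace ℝ (Fin d), ‖ξ‖ ≤ r → f (x + ξ) = f x := by
  intro ξ hξ
  -- x lies in some D ∈ P
  have hx : x ∈ ⋃₀ P := hcover ▸ Set.mem_univ x
  obtain ⟨D, hD, hxD⟩ := hx
  -- claim: x + ξ ∈ D
  have hmem : x + ξ ∈ D := by
    by_contra hnot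
    -- the segment from x to x+ξ is connected, meets D and Dᶜ
    have hseg : IsPreconnected (segment ℝ x (x + ξ)) :=
      (convex_segment x (x + ξ)).isPreconnected
    have h1 : (segment ℝ x (x + ξ) ∩ D).Nonempty :=
      ⟨x, left_mem_segment ℝ x (x + ξ), hxD⟩
    have h2 : (segment ℝ x (x + ξ) \ D).Nonempty :=
      ⟨x + ξ, right_mem_segment ℝ x (x + ξ), hnot⟩
    obtain ⟨z, hzseg, hzf⟩ := connected_cross_frontier hseg h1 h2
    have hzH : z ∈ H := hbd D hD hzf
    -- dist x z ≤ ‖ξ‖ ≤ r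
    have hzball : dist z x ≤ r := by
      have : segment ℝ x (x + ξ) ⊆ closedBall x r := by
        have hx' : x ∈ closedBall x r := mem_closedBall_self hr
        have hy' : x + ξ ∈ closedBall x r := by
          rw [mem_closedBall, dist_eq_norm, add_sub_cancel_left]
          exact hξ
        exact (convex_closedBall x r).segment_subset hx' hy'
      exact mem_closedBall.1 (this hzseg)
    have : infDist x H ≤ r := by
      calc infDist x H ≤ dist x z := infDist_le_dist_of_mem hzH
        _ ≤ r := by rwa [dist_comm]
    linarith
  exact hconst D hD (x + ξ) hmem x hxD
end
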